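/- There exists a bounded linear operator T on ℓ²(ℤ) and nontrivial closed subspaces M₁ and M₂ such that T is M₁-hypercyclic and its Hilbert-space adjoint T* is M₂-hypercyclic. -/

import Mathlib

noncomputable section
open scoped ComplexConjugate ENNReal

abbrev Hsp := lp (fun _ : ℤ => ℂ) 2


lemma lipEval (i : ℤ) : LipschitzWith 1 (fun x : Hsp => x i) := by
  intro x y
  simpa [edist_dist, dist_eq_norm, ← lp.coeFn_sub] using
    ENNReal.ofReal_le_ofReal (lp.norm_apply_le_norm (by norm_num) (x - y) i)

lemma contEval (i : ℤ) : Continuous (fun x : Hsp => x i) := (lipEval i).continuous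

/-- The closed subspace of sequences supported on the range of ι. -/
def Mo (ι : ℕ → ℤ) : Submodule ℂ Hsp where
  carrier := {x : Hsp | ∀ i, i ∉ Set.range ι → x i = 0}
  add_mem' {a b} ha hb i hi := by simp [lp.coeFn_add, ha i hi, hb i hi]
  zero_mem' i _ := by simp [lp.coeFn_zero]
  smul_mem' c x hx i hi := by simp [lp.coeFn_smul, hx i hi]

lemma mem_Mo {ι : ℕ → ℤ} {x : Hsp} : x ∈ Mo ι ↔ ∀ i, i ∉ Set.range ι → x i = 0 := Iff.rfl

lemma isClosed_Mo (ι : ℕ → ℤ) : IsClosed ((Mo ι : Submodule ℂ Hsp) : Set Hsp) := by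
  have : ((Mo ι : Submodule ℂ Hsp) : Set Hsp)
      = ⋂ (i : ℤ), ⋂ (_ : i ∉ Set.range ι), {x : Hsp | x i = 0} := by
    ext x; simp [mem_Mo]
  rw [this]
  exact isClosed_iInter fun i => isClosed_iInter fun _ =>
    isClosed_eq (contEval i) continuous_const

lemma single_mem_Mo (ι : ℕ → ℤ) (k : ℕ) (c : ℂ) : lp.single 2 (ι k) c ∈ Mo ι := by
  intro i hi
  exact lp.single_apply_ne (E := fun _ : ℤ => ℂ) 2 (ι k) c (fun h : i = ι k => hi ⟨k, h.symm⟩)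

lemma Mo_ext {ι : ℕ → ℤ} {x y : Hsp} (hx : x ∈ Mo ι) (hy : y ∈ Mo ι)
    (h : ∀ k, x (ι k) = y (ι k)) : x = y := by
  apply lp.ext; funext i
  by_cases hi : i ∈ Set.range ι
  · obtain ⟨k, rfl⟩ := hi; exact h k
  · rw [hx i hi, hy i hi]

lemma pow_mem_and_apply {A : Hsp →L[ℂ] Hsp} {ι : ℕ → ℤ}
    (hA1 : ∀ x ∈ Mo ι, A x ∈ Mo ι)
    (hA2 : ∀ x ∈ Mo ι, ∀ k, (A x) (ι k) = 2 * x (ι (k + 1))) :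
    ∀ (p : ℕ) (x : Hsp), x ∈ Mo ι → ((A ^ p) x ∈ Mo ι ∧
      ∀ k, ((A ^ p) x) (ι k) = 2 ^ p * x (ι (k + p))) := by
  intro p
  induction p with
  | zero => intro x hx; simp [hx]
  | succ p ih =>
    intro x hx
    have hAx := hA1 x hx
    have key : (A ^ (p + 1)) x = (A ^ p) (A x) := by
      rw [pow_succ]; rfl
    obtain ⟨h1, h2⟩ := ih (A x) hAx
    refine ⟨key ▸ h1, fun k => ?_⟩
    rw [key, h2 k, hA2 x hx (k + p)]
    ring_nf


lemma lp_single_zero (i : ℤ) : lp.single (E := fun _ : ℤ => ℂ) 2 i 0 = 0 := by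
  apply lp.ext; funext j
  by_cases h : j = i <;> simp [lp.single_apply, h, lp.coeFn_zero]

lemma trunc_approx {ι : ℕ → ℤ} (hinj : Function.Injective ι) {y : Hsp}
    (hy : ∀ i, i ∉ Set.range ι → y i = 0) {ε : ℝ} (hε : 0 < ε) :
    ∃ N : ℕ, ‖y - ∑ k ∈ Finset.range N, lp.single 2 (ι k) (y (ι k))‖ < ε := by
  have hs := lp.hasSum_single (E := fun _ : ℤ => ℂ) (p := 2) (by norm_num) y
  rw [HasSum, SummationFilter.unconditional_filter, Metric.tendsto_atTop] at hs
  obtain ⟨F₀, hF₀⟩ := hs ε hε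
  classical
  set K : Finset ℕ := F₀.preimage ι (hinj.injOn) with hK
  refine ⟨K.sup id + 1, ?_⟩
  set N := K.sup id + 1
  set F : Finset ℤ := F₀ ∪ (Finset.range N).image ι with hF
  have h1 := hF₀ F (Finset.subset_union_left)
  rw [dist_eq_norm] at h1
  have h2 : ∑ i ∈ F, lp.single 2 i (y i) =
      ∑ k ∈ Finset.range N, lp.single 2 (ι k) (y (ι k)) := by
    have hsub : (Finset.range N).image ι ⊆ F := Finset.subset_union_right
    rw [← Finset.sum_image (f := fun i => lp.single (E := fun _ : ℤ => ℂ) 2 i (y i))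
      (g := ι) (fun a _ b _ h => hinj h)]
    refine (Finset.sum_subset hsub ?_).symm
    intro i hiF hi
    have : y i = 0 := by
      by_cases hr : i ∈ Set.range ι
      · obtain ⟨k, rfl⟩ := hr
        exfalso
        apply hi
        refine Finset.mem_image.mpr ⟨k, ?_, rfl⟩
        have hiF₀ : ι k ∈ F₀ := by
          rcases Finset.mem_union.mp hiF with h | h
          · exact h
          · exact absurd h hi
        have : k ∈ K := Finset.mem_preimage.mpr hiF₀
        exact Finset.mem_range.mpr (Nat.lt_succ_of_le (Finset.le_sup (f := id) this))
      · exact hy i hr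
    rw [this, lp_single_zero]
  rw [h2] at h1
  rw [← norm_neg]
  simpa using h1
/-- A finite block supported on `ι '' [off, off + Nn)` with coefficients `a * co j`. -/
def blk (ι : ℕ → ℤ) (co : ℕ → ℂ) (Nn : ℕ) (off : ℕ) (a : ℂ) : Hsp :=
  ∑ j ∈ Finset.range Nn, (a * co j) • lp.single 2 (ι (off + j)) 1

lemma blk_mem (ι : ℕ → ℤ) (co : ℕ → ℂ) (Nn off : ℕ) (a : ℂ) :
    blk ι co Nn off a ∈ Mo ι :=
  Submodule.sum_mem _ fun j _ => Submodule.smul_mem _ _ (single_mem_Mo ι (off + j) 1)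

lemma blk_apply {ι : ℕ → ℤ} (hinj : Function.Injective ι) (co : ℕ → ℂ) (Nn off : ℕ)
    (a : ℂ) (t : ℕ) :
    (blk ι co Nn off a : Hsp) (ι t) =
      if off ≤ t ∧ t < off + Nn then a * co (t - off) else 0 := by
  classical
  have hcoe : (blk ι co Nn off a : Hsp) (ι t)
      = ∑ j ∈ Finset.range Nn,
          ((a * co j) • (lp.single 2 (ι (off + j)) 1 : Hsp)) (ι t) := by
    rw [blk, lp.coeFn_sum, Finset.sum_apply]
  rw [hcoe]
  have hterm : ∀ j, ((a * co j) • (lp.single 2 (ι (off + j)) 1 : Hsp)) (ι t)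
      = if t = off + j then a * co j else 0 := by
    intro j
    rw [lp.coeFn_smul, Pi.smul_apply, lp.single_apply]
    by_cases h : t = off + j
    · rw [if_pos h, Pi.single_apply, if_pos (congrArg ι h)]; simp
    · rw [if_neg h, Pi.single_apply, if_neg (fun hc => h (hinj hc))]; simp
  simp only [hterm]
  by_cases hin : off ≤ t ∧ t < off + Nn
  · rw [if_pos hin]
    rw [Finset.sum_eq_single (t - off)]
    · rw [if_pos (by omega)]
    · intro j _ hj; rw [if_neg (by omega)]
    · intro hmem; exfalso; exact hmem (Finset.mem_range.mpr (by omega))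
  · rw [if_neg hin]
    apply Finset.sum_eq_zero
    intro j hj
    rw [Finset.mem_range] at hj
    rw [if_neg (by omega)]

lemma blk_norm_le (ι : ℕ → ℤ) (co : ℕ → ℂ) (Nn off : ℕ) (a : ℂ) :
    ‖blk ι co Nn off a‖ ≤ ‖a‖ * ∑ j ∈ Finset.range Nn, ‖co j‖ := by
  refine (norm_sum_le _ _).trans ?_
  rw [Finset.mul_sum]
  apply Finset.sum_le_sum
  intro j _
  rw [norm_smul]
  have h1 : ‖(lp.single 2 (ι (off + j)) 1 : Hsp)‖ = 1 := by
    have := lp.norm_single (E := fun _ : ℤ => ℂ) (p := 2) (by norm_num)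
      (ι (off + j)) (1 : ℂ)
    simpa using this
  rw [h1, mul_one, norm_mul]

lemma pow_aux {a b c : ℕ} (h : a + b ≤ c) : ((2:ℝ) ^ c)⁻¹ * 2 ^ a ≤ (1/2) ^ b := by
  have h1 : (2:ℝ) ^ (a + b) ≤ 2 ^ c := pow_le_pow_right₀ one_le_two h
  have h2 : ((2:ℝ) ^ c)⁻¹ ≤ ((2:ℝ) ^ (a + b))⁻¹ :=
    inv_anti₀ (by positivity) h1
  calc ((2:ℝ) ^ c)⁻¹ * 2 ^ a ≤ ((2:ℝ) ^ (a + b))⁻¹ * 2 ^ a :=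
        mul_le_mul_of_nonneg_right h2 (by positivity)
  _ = (1/2) ^ b := by
      rw [pow_add, mul_inv, mul_comm ((2:ℝ)^a)⁻¹ _, mul_assoc,
        inv_mul_cancel₀ (by positivity : (2:ℝ)^a ≠ 0), mul_one, one_div, inv_pow]

lemma single_eq_smul (i : ℤ) (c : ℂ) :
    lp.single (E := fun _ : ℤ => ℂ) 2 i c = c • lp.single 2 i 1 := by
  have := lp.single_smul (E := fun _ : ℤ => ℂ) 2 i c (1 : ℂ)
  simp only [smul_eq_mul, mul_one] at this
  exact this

section Blocks
variable {A : Hsp →L[ℂ] Hsp} {ι : ℕ → ℤ}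

lemma pow_blk_eq_zero (hinj : Function.Injective ι)
    (hA1 : ∀ x ∈ Mo ι, A x ∈ Mo ι)
    (hA2 : ∀ x ∈ Mo ι, ∀ k, (A x) (ι k) = 2 * x (ι (k + 1)))
    (co : ℕ → ℂ) (Nn off : ℕ) (a : ℂ) (p : ℕ) (hp : off + Nn ≤ p) :
    (A ^ p) (blk ι co Nn off a) = 0 := by
  obtain ⟨hmem, happ⟩ := pow_mem_and_apply hA1 hA2 p _ (blk_mem ι co Nn off a)
  refine Mo_ext hmem (Submodule.zero_mem _) (fun t => ?_)
  rw [happ t, blk_apply hinj, if_neg (by omega), mul_zero, lp.coeFn_zero, Pi.zero_apply]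

lemma pow_blk_eq (hinj : Function.Injective ι)
    (hA1 : ∀ x ∈ Mo ι, A x ∈ Mo ι)
    (hA2 : ∀ x ∈ Mo ι, ∀ k, (A x) (ι k) = 2 * x (ι (k + 1)))
    (co : ℕ → ℂ) (Nn off : ℕ) (a : ℂ) (p : ℕ) (hp : p ≤ off) :
    (A ^ p) (blk ι co Nn off a) = blk ι co Nn (off - p) ((2:ℂ) ^ p * a) := by
  obtain ⟨hmem, happ⟩ := pow_mem_and_apply hA1 hA2 p _ (blk_mem ι co Nn off a)
  refine Mo_ext hmem (blk_mem _ _ _ _ _) (fun t => ?_)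
  rw [happ t, blk_apply hinj, blk_apply hinj]
  by_cases hc : off - p ≤ t ∧ t < off - p + Nn
  · rw [if_pos (by omega), if_pos hc]
    have : t + p - off = t - (off - p) := by omega
    rw [this]; ring
  · rw [if_neg (by omega), if_neg hc, mul_zero]

end Blocks

set_option maxHeartbeats 1000000 in
/-- Any element of `Mo ι` can be approximated by blocks with coefficients from `u'`. -/
lemma dense_blocks {ι : ℕ → ℤ} (hinj : Function.Injective ι)
    {u : ℕ → ℂ} (hu : DenseRange u) (u' : ℕ → ℂ) (hu'0 : u' 0 = 0)
    (hu's : ∀ m, u' (m + 1) = u m)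
    {y : Hsp} (hy : y ∈ Mo ι) {δ : ℝ} (hδ : 0 < δ) :
    ∃ cc : ℕ →₀ ℕ,
      ‖y - blk ι (fun j => u' (cc j)) (cc.support.sup id + 1) 0 1‖ < δ := by
  classical
  obtain ⟨N, hN⟩ := trunc_approx hinj hy (half_pos hδ)
  rcases Nat.eq_zero_or_pos N with rfl | hNpos
  · refine ⟨0, ?_⟩
    have hblk : blk ι (fun j => u' ((0 : ℕ →₀ ℕ) j)) ((0 : ℕ →₀ ℕ).support.sup id + 1) 0 1
        = 0 := by
      simp [blk, hu'0, lp_single_zero]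
    rw [hblk]
    simpa using hN.trans (half_lt_self hδ)
  · have hd : ∀ k : ℕ, ∃ mk : ℕ, dist (y (ι k)) (u mk) < δ / (2 * N) := by
      intro k
      exact Metric.denseRange_iff.mp hu _ _ (by positivity)
    choose g hg using hd
    refine ⟨Finsupp.onFinset (Finset.range N) (fun k => if k < N then g k + 1 else 0)
      (fun k h => by by_cases hk : k < N <;> simp_all), ?_⟩
    set cc : ℕ →₀ ℕ := Finsupp.onFinset (Finset.range N) (fun k => if k < N then g k + 1 else 0)
      (fun k h => by by_cases hk : k < N <;> simp_all) with hcc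
    have hccval : ∀ k, k < N → cc k = g k + 1 := fun k hk => by simp [hcc, hk]
    have hccval' : ∀ k, ¬ k < N → cc k = 0 := fun k hk => by simp [hcc, hk]
    have hsupp : cc.support = Finset.range N := by
      ext k
      simp only [Finsupp.mem_support_iff, Finset.mem_range]
      by_cases hk : k < N
      · simp [hccval k hk, hk]
      · simp [hccval' k hk, hk]
    have hsup : cc.support.sup id + 1 = N := by
      rw [hsupp]
      have h1 : (Finset.range N).sup id ≤ N - 1 :=
        Finset.sup_le fun b hb => by have := Finset.mem_range.mp hb; simp only [id]; omega
      have h2 : N - 1 ≤ (Finset.range N).sup id :=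
        Finset.le_sup (f := id) (Finset.mem_range.mpr (by omega))
      omega
    rw [hsup]
    set TN := ∑ k ∈ Finset.range N, lp.single (E := fun _ : ℤ => ℂ) 2 (ι k) (y (ι k)) with hTN
    have hblk : blk ι (fun j => u' (cc j)) N 0 1
        = ∑ k ∈ Finset.range N, (u (g k)) • lp.single 2 (ι k) 1 := by
      apply Finset.sum_congr rfl
      intro k hk
      have hkN := Finset.mem_range.mp hk
      simp only [one_mul, Nat.zero_add, hccval k hkN, hu's]
    have hdiff : TN - blk ι (fun j => u' (cc j)) N 0 1
        = ∑ k ∈ Finset.range N, (y (ι k) - u (g k)) • lp.single 2 (ι k) 1 := by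
      rw [hblk, hTN, ← Finset.sum_sub_distrib]
      apply Finset.sum_congr rfl
      intro k _
      rw [single_eq_smul, sub_smul]
    have hnorm2 : ‖TN - blk ι (fun j => u' (cc j)) N 0 1‖ < δ / 2 := by
      rw [hdiff]
      calc ‖∑ k ∈ Finset.range N, (y (ι k) - u (g k)) • (lp.single 2 (ι k) 1 : Hsp)‖
          ≤ ∑ k ∈ Finset.range N, ‖(y (ι k) - u (g k)) • (lp.single 2 (ι k) 1 : Hsp)‖ :=
            norm_sum_le _ _
      _ < ∑ k ∈ Finset.range N, δ / (2 * N) := by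
          apply Finset.sum_lt_sum_of_nonempty (Finset.nonempty_range_iff.mpr hNpos.ne')
          intro k _
          rw [norm_smul]
          have h1 : ‖(lp.single 2 (ι k) 1 : Hsp)‖ = 1 := by
            have := lp.norm_single (E := fun _ : ℤ => ℂ) (p := 2) (by norm_num)
              (ι k) (1 : ℂ)
            simpa using this
          rw [h1, mul_one]
          have hgk := hg k
          rw [dist_eq_norm] at hgk
          exact hgk
      _ = δ / 2 := by
          rw [Finset.sum_const, Finset.card_range, nsmul_eq_mul]
          field_simp
    calc ‖y - blk ι (fun j => u' (cc j)) N 0 1‖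
        = ‖(y - TN) + (TN - blk ι (fun j => u' (cc j)) N 0 1)‖ := by rw [sub_add_sub_cancel]
    _ ≤ ‖y - TN‖ + ‖TN - blk ι (fun j => u' (cc j)) N 0 1‖ := norm_add_le _ _
    _ < δ / 2 + δ / 2 := add_lt_add hN hnorm2
    _ = δ := add_halves δ

set_option maxHeartbeats 1000000 in
theorem master {A : Hsp →L[ℂ] Hsp} {ι : ℕ → ℤ} (hinj : Function.Injective ι)
    (hA1 : ∀ x ∈ Mo ι, A x ∈ Mo ι)
    (hA2 : ∀ x ∈ Mo ι, ∀ k, (A x) (ι k) = 2 * x (ι (k + 1))) :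
    ∃ x, ((Mo ι : Submodule ℂ Hsp) : Set Hsp) ⊆
      closure ({y | ∃ nn : ℕ, (A ^ nn) x = y} ∩ (Mo ι : Set Hsp)) := by
  classical
  obtain ⟨u, hu⟩ := TopologicalSpace.exists_dense_seq ℂ
  set u' : ℕ → ℂ := fun n => Nat.rec 0 (fun m _ => u m) n with hu'
  have hu'0 : u' 0 = 0 := rfl
  have hu's : ∀ m, u' (m + 1) = u m := fun m => rfl
  obtain ⟨σ, hσ⟩ := exists_surjective_nat (ℕ →₀ ℕ)
  set co : ℕ → ℕ → ℂ := fun k j => u' (σ (Nat.unpair k).1 j) with hco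
  set Nf : ℕ → ℕ := fun k => (σ (Nat.unpair k).1).support.sup id + 1 with hNf
  set C : ℕ → ℝ := fun k => ∑ j ∈ Finset.range (Nf k), ‖co k j‖ with hC
  have hCex : ∀ k, ∃ mm : ℕ, C k ≤ 2 ^ mm := fun k =>
    (pow_unbounded_of_one_lt (C k) one_lt_two).imp fun mm h => h.le
  set m : ℕ → ℕ := fun k => (hCex k).choose with hmdef
  have hm : ∀ k, C k ≤ 2 ^ m k := fun k => (hCex k).choose_spec
  set n : ℕ → ℕ :=
    fun k => Nat.rec (m 0) (fun k nk => nk + Nf k + (k + 1) + m (k + 1) + 1) k with hn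
  have hnsucc : ∀ k, n (k + 1) = n k + Nf k + (k + 1) + m (k + 1) + 1 := fun k => rfl
  have hmono : Monotone n := monotone_nat_of_le_succ fun k => by rw [hnsucc]; omega
  have hgap : ∀ j k, j < k → n j + Nf j ≤ n k := by
    intro j k hjk
    have h1 : n j + Nf j ≤ n (j + 1) := by rw [hnsucc]; omega
    exact h1.trans (hmono hjk)
  have hnk : ∀ k, k + m k ≤ n k := by
    intro k
    cases k with
    | zero => simp [hn]
    | succ k => rw [hnsucc]; omega
  have hjump : ∀ k j, k < j → n k + j + m j ≤ n j := by
    intro k j hkj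
    cases j with
    | zero => omega
    | succ jj =>
      have h1 : n k ≤ n jj := hmono (Nat.lt_succ_iff.mp hkj)
      rw [hnsucc]; omega
  set term : ℕ → Hsp := fun k => blk ι (co k) (Nf k) (n k) (((2:ℂ) ^ n k)⁻¹) with hterm
  have hterm_norm : ∀ k, ‖term k‖ ≤ (1/2 : ℝ) ^ k := by
    intro k
    refine (blk_norm_le _ _ _ _ _).trans ?_
    have h1 : ‖((2:ℂ) ^ n k)⁻¹‖ = ((2:ℝ) ^ n k)⁻¹ := by
      rw [norm_inv, norm_pow]; norm_num
    rw [h1]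
    calc ((2:ℝ) ^ n k)⁻¹ * C k ≤ ((2:ℝ) ^ n k)⁻¹ * 2 ^ m k :=
          mul_le_mul_of_nonneg_left (hm k) (by positivity)
    _ ≤ (1/2) ^ k := pow_aux (by have := hnk k; omega)
  have hgeo : Summable fun k : ℕ => (1/2 : ℝ) ^ k :=
    summable_geometric_of_lt_one (by norm_num) (by norm_num)
  have hsumm : Summable term := Summable.of_norm_bounded hgeo hterm_norm
  set x := ∑' k, term k with hx
  have hterm_mem : ∀ k, term k ∈ Mo ι := fun k => blk_mem _ _ _ _ _
  have hx_mem : x ∈ Mo ι := by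
    refine (isClosed_Mo ι).mem_of_tendsto hsumm.hasSum
      (Filter.Eventually.of_forall fun s => ?_)
    exact Submodule.sum_mem _ fun k _ => hterm_mem k
  have hpow := pow_mem_and_apply hA1 hA2
  have hstage : ∀ k, ‖(A ^ n k) x - blk ι (co k) (Nf k) 0 1‖ ≤ (1/2 : ℝ) ^ k := by
    intro k
    have hmap : (A ^ n k) x = ∑' j, (A ^ n k) (term j) := (A ^ n k).map_tsum hsumm
    have hsf : Summable fun j => (A ^ n k) (term j) := hsumm.mapL _
    have hfin : ∑ j ∈ Finset.range (k + 1), (A ^ n k) (term j)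
        = blk ι (co k) (Nf k) 0 1 := by
      rw [Finset.sum_eq_single k]
      · rw [hterm]
        show (A ^ n k) (blk ι (co k) (Nf k) (n k) (((2:ℂ) ^ n k)⁻¹)) = _
        rw [pow_blk_eq hinj hA1 hA2 _ _ _ _ _ le_rfl, Nat.sub_self]
        congr 1
        exact mul_inv_cancel₀ (pow_ne_zero _ two_ne_zero)
      · intro j hj hne
        have hjk : j < k := by rw [Finset.mem_range] at hj; omega
        exact pow_blk_eq_zero hinj hA1 hA2 _ _ _ _ _ ((hgap j k hjk).trans (by omega))
      · intro h; exact absurd (Finset.self_mem_range_succ k) h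
    have htail : ∀ j, ‖(A ^ n k) (term (j + (k + 1)))‖ ≤ (1/2 : ℝ) ^ (j + (k + 1)) := by
      intro j
      have hkj : k < j + (k + 1) := by omega
      rw [hterm]
      show ‖(A ^ n k) (blk ι (co (j + (k+1))) (Nf (j + (k+1))) (n (j + (k+1)))
        (((2:ℂ) ^ n (j + (k+1)))⁻¹))‖ ≤ _
      rw [pow_blk_eq hinj hA1 hA2 _ _ _ _ _ (hmono (by omega : k ≤ j + (k + 1)))]
      refine (blk_norm_le _ _ _ _ _).trans ?_
      have hnorm : ‖(2:ℂ) ^ n k * ((2:ℂ) ^ n (j + (k + 1)))⁻¹‖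
          = ((2:ℝ) ^ n (j + (k + 1)))⁻¹ * 2 ^ n k := by
        rw [norm_mul, norm_inv, norm_pow, norm_pow]
        norm_num
        ring
      rw [hnorm]
      calc ((2:ℝ) ^ n (j + (k + 1)))⁻¹ * 2 ^ n k * C (j + (k + 1))
          ≤ ((2:ℝ) ^ n (j + (k + 1)))⁻¹ * 2 ^ n k * 2 ^ m (j + (k + 1)) := by
            apply mul_le_mul_of_nonneg_left (hm _) (by positivity)
      _ = ((2:ℝ) ^ n (j + (k + 1)))⁻¹ * 2 ^ (n k + m (j + (k + 1))) := by
            rw [pow_add]; ring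
      _ ≤ (1/2) ^ (j + (k + 1)) := pow_aux (by have := hjump k (j + (k+1)) hkj; omega)
    have hsplit := Summable.sum_add_tsum_nat_add (f := fun j => (A ^ n k) (term j)) (k + 1) hsf
    have heq : (A ^ n k) x - blk ι (co k) (Nf k) 0 1
        = ∑' j, (A ^ n k) (term (j + (k + 1))) := by
      rw [hmap, ← hsplit, hfin, add_sub_cancel_left]
    rw [heq]
    have hgeo2 : Summable fun j : ℕ => (1/2 : ℝ) ^ (j + (k + 1)) := by
      simpa [pow_add] using hgeo.mul_right ((1/2 : ℝ) ^ (k + 1))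
    have hsum2 : Summable fun j => ‖(A ^ n k) (term (j + (k + 1)))‖ :=
      Summable.of_nonneg_of_le (fun j => norm_nonneg _) htail hgeo2
    calc ‖∑' j, (A ^ n k) (term (j + (k + 1)))‖
        ≤ ∑' j, ‖(A ^ n k) (term (j + (k + 1)))‖ := norm_tsum_le_tsum_norm hsum2
    _ ≤ ∑' j : ℕ, (1/2 : ℝ) ^ (j + (k + 1)) := Summable.tsum_le_tsum htail hsum2 hgeo2
    _ = (∑' j : ℕ, (1/2 : ℝ) ^ j) * (1/2) ^ (k + 1) := by
        rw [← tsum_mul_right]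
        congr 1; funext j; rw [pow_add]
    _ = 2 * (1/2 : ℝ) ^ (k + 1) := by
        rw [tsum_geometric_of_lt_one (by norm_num) (by norm_num)]
        norm_num
    _ ≤ (1/2 : ℝ) ^ k := by
        rw [pow_succ]; ring_nf; norm_num
  -- density
  refine ⟨x, ?_⟩
  intro y hy
  rw [Metric.mem_closure_iff]
  intro ε hε
  obtain ⟨cc, hcc⟩ := dense_blocks hinj hu u' hu'0 hu's hy (half_pos hε)
  obtain ⟨a, ha⟩ := hσ cc
  obtain ⟨b, hb⟩ := exists_pow_lt_of_lt_one (half_pos hε) (by norm_num : (1/2:ℝ) < 1)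
  set k := Nat.pair a b with hk
  have hcok : co k = fun j => u' (cc j) := by
    funext j; rw [hco]; simp only [hk, Nat.unpair_pair, ha]
  have hNfk : Nf k = cc.support.sup id + 1 := by
    rw [hNf]; simp only [hk, Nat.unpair_pair, ha]
  have hblkk : blk ι (co k) (Nf k) 0 1
      = blk ι (fun j => u' (cc j)) (cc.support.sup id + 1) 0 1 := by
    rw [hcok, hNfk]
  refine ⟨(A ^ n k) x, ⟨⟨n k, rfl⟩, (hpow (n k) x hx_mem).1⟩, ?_⟩
  have h2 : (1/2 : ℝ) ^ k ≤ (1/2 : ℝ) ^ b :=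
    pow_le_pow_of_le_one (by norm_num) (by norm_num) (Nat.right_le_pair a b)
  calc dist y ((A ^ n k) x)
      ≤ dist y (blk ι (co k) (Nf k) 0 1) + dist (blk ι (co k) (Nf k) 0 1) ((A ^ n k) x) :=
        dist_triangle _ _ _
  _ < ε / 2 + ε / 2 := by
      apply add_lt_add_of_lt_of_le
      · rw [dist_eq_norm, hblkk]; exact hcc
      · rw [dist_comm, dist_eq_norm]
        exact ((hstage k).trans h2).trans hb.le
  _ = ε := add_halves ε

def reindex (e : ℤ ≃ ℤ) : Hsp ≃ₗᵢ[ℂ] Hsp where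
  toFun f := ⟨fun n => f (e n), by
    apply memℓp_gen
    exact (e.summable_iff (f := fun i => ‖f i‖ ^ (2:ℝ≥0∞).toReal)).mpr
      ((lp.memℓp f).summable (by norm_num))⟩
  invFun f := ⟨fun n => f (e.symm n), by
    apply memℓp_gen
    exact (e.symm.summable_iff (f := fun i => ‖f i‖ ^ (2:ℝ≥0∞).toReal)).mpr
      ((lp.memℓp f).summable (by norm_num))⟩
  left_inv f := by ext n; simp
  right_inv f := by ext n; simp
  map_add' f g := by ext n; simp [lp.coeFn_add]; rfl
  map_smul' c f := by ext n; simp [lp.coeFn_smul]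
  norm_map' f := by
    rw [lp.norm_eq_tsum_rpow (by norm_num), lp.norm_eq_tsum_rpow (by norm_num)]
    congr 1
    exact e.tsum_eq fun i => ‖f i‖ ^ (2:ℝ≥0∞).toReal

section Operator

def Veq : Hsp ≃ₗᵢ[ℂ] Hsp := reindex (Equiv.addRight (1:ℤ))

def e0 : Hsp := lp.single 2 0 1
def em1 : Hsp := lp.single 2 (-1) 1

def Tcut : Hsp →L[ℂ] Hsp :=
  (2:ℂ) • (Veq.toLinearIsometry.toContinuousLinearMap - (innerSL ℂ e0).smulRight em1)

def Scut : Hsp →L[ℂ] Hsp :=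
  (2:ℂ) • (Veq.symm.toLinearIsometry.toContinuousLinearMap - (innerSL ℂ em1).smulRight e0)

lemma inner_e0 (x : Hsp) : @inner ℂ _ _ e0 x = x 0 := by
  rw [e0, lp.inner_single_left]
  simp [RCLike.inner_apply]

lemma inner_em1 (x : Hsp) : @inner ℂ _ _ em1 x = x (-1) := by
  rw [em1, lp.inner_single_left]
  simp [RCLike.inner_apply]

lemma Tcut_apply (x : Hsp) (n : ℤ) :
    (Tcut x) n = 2 * (x (n + 1) - if n = -1 then x 0 else 0) := by
  rw [Tcut]
  simp only [ContinuousLinearMap.smul_apply, ContinuousLinearMap.sub_apply,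
    ContinuousLinearMap.smulRight_apply]
  rw [lp.coeFn_smul, Pi.smul_apply, lp.coeFn_sub, Pi.sub_apply]
  rw [innerSL_apply_apply, inner_e0]
  have h1 : (Veq.toLinearIsometry.toContinuousLinearMap x) n = x (n + 1) := rfl
  rw [h1, lp.coeFn_smul, Pi.smul_apply]
  have h2 : (em1 : ∀ _ : ℤ, ℂ) n = if n = -1 then 1 else 0 := by
    by_cases h : n = -1
    · subst h; rw [if_pos rfl]; exact lp.single_apply_self (E := fun _ : ℤ => ℂ) 2 (-1) 1
    · rw [if_neg h]; exact lp.single_apply_ne (E := fun _ : ℤ => ℂ) 2 (-1) 1 h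
  rw [h2]
  by_cases h : n = -1 <;> simp [h, smul_eq_mul] <;> ring

lemma Scut_apply (x : Hsp) (n : ℤ) :
    (Scut x) n = 2 * (x (n - 1) - if n = 0 then x (-1) else 0) := by
  rw [Scut]
  simp only [ContinuousLinearMap.smul_apply, ContinuousLinearMap.sub_apply,
    ContinuousLinearMap.smulRight_apply]
  rw [lp.coeFn_smul, Pi.smul_apply, lp.coeFn_sub, Pi.sub_apply]
  rw [innerSL_apply_apply, inner_em1]
  have h1 : (Veq.symm.toLinearIsometry.toContinuousLinearMap x) n = x (n - 1) := rfl
  rw [h1, lp.coeFn_smul, Pi.smul_apply]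
  have h2 : (e0 : ∀ _ : ℤ, ℂ) n = if n = 0 then 1 else 0 := by
    by_cases h : n = 0
    · subst h; rw [if_pos rfl]; exact lp.single_apply_self (E := fun _ : ℤ => ℂ) 2 0 1
    · rw [if_neg h]; exact lp.single_apply_ne (E := fun _ : ℤ => ℂ) 2 0 1 h
  rw [h2]
  by_cases h : n = 0 <;> simp [h, smul_eq_mul] <;> ring

lemma adjoint_Tcut : ContinuousLinearMap.adjoint Tcut = Scut := by
  symm
  rw [ContinuousLinearMap.eq_adjoint_iff]
  intro x y
  rw [Tcut, Scut]
  simp only [ContinuousLinearMap.smul_apply, ContinuousLinearMap.sub_apply,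
    ContinuousLinearMap.smulRight_apply]
  rw [inner_smul_left, inner_smul_right, inner_sub_left, inner_sub_right,
    inner_smul_left, inner_smul_right]
  have hA : (innerSL ℂ) em1 x = x (-1) := inner_em1 x
  have hB : (innerSL ℂ) e0 y = y 0 := inner_e0 y
  rw [hA, hB]
  have hV : @inner ℂ _ _ (Veq.symm.toLinearIsometry.toContinuousLinearMap x) y
      = @inner ℂ _ _ x (Veq.toLinearIsometry.toContinuousLinearMap y) := by
    show @inner ℂ _ _ (Veq.symm x) y = @inner ℂ _ _ x (Veq y)
    rw [← Veq.inner_map_map (Veq.symm x) y, Veq.apply_symm_apply]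
  rw [hV]
  have hx : @inner ℂ _ _ x em1 = (starRingEnd ℂ) (x (-1)) := by
    rw [← inner_conj_symm, inner_em1]
  rw [hx]
  have h2 : (starRingEnd ℂ) (2:ℂ) = 2 := by
    simp [Complex.conj_ofNat]
  rw [h2, inner_e0]
  ring

end Operator

def iota1 : ℕ → ℤ := fun k => (k : ℤ)
def iota2 : ℕ → ℤ := fun k => (-1 - k : ℤ)

lemma iota1_inj : Function.Injective iota1 := fun a b h => by simpa [iota1] using h
lemma iota2_inj : Function.Injective iota2 := fun a b h => by
  simp only [iota2, sub_right_inj] at h; exact_mod_cast h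

lemma mem_range_iota1 (i : ℤ) : i ∈ Set.range iota1 ↔ 0 ≤ i := by
  constructor
  · rintro ⟨k, rfl⟩; exact Int.natCast_nonneg k
  · intro h; exact ⟨i.toNat, Int.toNat_of_nonneg h⟩

lemma mem_range_iota2 (i : ℤ) : i ∈ Set.range iota2 ↔ i < 0 := by
  constructor
  · rintro ⟨k, rfl⟩; simp [iota2]; omega
  · intro h
    refine ⟨(-1 - i).toNat, ?_⟩
    simp only [iota2]
    rw [Int.toNat_of_nonneg (by omega)]
    ring

lemma hT1 : ∀ x ∈ Mo iota1, Tcut x ∈ Mo iota1 := by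
  intro x hx i hi
  rw [mem_range_iota1] at hi
  push_neg at hi
  rw [Tcut_apply]
  by_cases h : i = -1
  · subst h
    rw [if_pos rfl]
    have h0 : (-1 + 1 : ℤ) = 0 := by norm_num
    rw [h0, sub_self, mul_zero]
  · rw [if_neg h]
    have : x (i + 1) = 0 := hx _ (by rw [mem_range_iota1]; omega)
    rw [this]; ring

lemma hT2 : ∀ x ∈ Mo iota1, ∀ k, (Tcut x) (iota1 k) = 2 * x (iota1 (k + 1)) := by
  intro x _ k
  rw [Tcut_apply]
  rw [if_neg (by simp only [iota1]; omega)]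
  simp only [iota1]
  push_cast
  ring_nf

lemma hS1 : ∀ x ∈ Mo iota2, Scut x ∈ Mo iota2 := by
  intro x hx i hi
  rw [mem_range_iota2] at hi
  push_neg at hi
  rw [Scut_apply]
  by_cases h : i = 0
  · subst h
    rw [if_pos rfl]
    have h0 : (0 - 1 : ℤ) = -1 := by norm_num
    rw [h0, sub_self, mul_zero]
  · rw [if_neg h]
    have : x (i - 1) = 0 := hx _ (by rw [mem_range_iota2]; omega)
    rw [this]; ring

lemma hS2 : ∀ x ∈ Mo iota2, ∀ k, (Scut x) (iota2 k) = 2 * x (iota2 (k + 1)) := by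
  intro x _ k
  rw [Scut_apply]
  rw [if_neg (by simp only [iota2]; omega)]
  have h1 : (iota2 k) - 1 = iota2 (k + 1) := by simp [iota2]; push_cast; ring
  rw [h1]
  ring

lemma Mo_ne_bot (ι : ℕ → ℤ) : (Mo ι : Submodule ℂ Hsp) ≠ ⊥ := by
  intro h
  have hm : lp.single (E := fun _ : ℤ => ℂ) 2 (ι 0) 1 ∈ Mo ι := single_mem_Mo ι 0 1
  rw [h, Submodule.mem_bot] at hm
  have h0 : (lp.single (E := fun _ : ℤ => ℂ) 2 (ι 0) (1:ℂ) : ∀ _ : ℤ, ℂ) (ι 0) = 0 := by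
    rw [hm]; simp [lp.coeFn_zero]
  rw [lp.single_apply_self (E := fun _ : ℤ => ℂ) 2 (ι 0) 1] at h0
  exact one_ne_zero h0

lemma Mo_ne_top {ι : ℕ → ℤ} {i : ℤ} (hi : i ∉ Set.range ι) :
    (Mo ι : Submodule ℂ Hsp) ≠ ⊤ := by
  intro h
  have hm : lp.single (E := fun _ : ℤ => ℂ) 2 i 1 ∈ Mo ι := by rw [h]; trivial
  have := hm i hi
  rw [lp.single_apply_self (E := fun _ : ℤ => ℂ) 2 i 1] at this
  exact one_ne_zero this



/-- There exists a bounded linear operator `T` on `ℓ²(ℤ)` and nontrivial closed subspaces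
`M₁`, `M₂` such that `T` is `M₁`-hypercyclic and its Hilbert-space adjoint `T*` is
`M₂`-hypercyclic. -/
theorem exists_operator_and_adjoint_subspace_hypercyclic :
    ∃ (T : lp (fun _ : ℤ => ℂ) 2 →L[ℂ] lp (fun _ : ℤ => ℂ) 2)
      (M₁ M₂ : Submodule ℂ (lp (fun _ : ℤ => ℂ) 2)),
      IsClosed (M₁ : Set (lp (fun _ : ℤ => ℂ) 2)) ∧
      IsClosed (M₂ : Set (lp (fun _ : ℤ => ℂ) 2)) ∧
      M₁ ≠ ⊥ ∧ M₁ ≠ ⊤ ∧ M₂ ≠ ⊥ ∧ M₂ ≠ ⊤ ∧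
      (∃ x, (M₁ : Set (lp (fun _ : ℤ => ℂ) 2)) ⊆
        closure ({y | ∃ n : ℕ, (T ^ n) x = y} ∩ (M₁ : Set (lp (fun _ : ℤ => ℂ) 2)))) ∧
      (∃ x, (M₂ : Set (lp (fun _ : ℤ => ℂ) 2)) ⊆
        closure ({y | ∃ n : ℕ, ((ContinuousLinearMap.adjoint T) ^ n) x = y} ∩
          (M₂ : Set (lp (fun _ : ℤ => ℂ) 2)))) := by
  refine ⟨Tcut, Mo iota1, Mo iota2, isClosed_Mo _, isClosed_Mo _, Mo_ne_bot _,
    Mo_ne_top (i := -1) (by rw [mem_range_iota1]; omega),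
    Mo_ne_bot _, Mo_ne_top (i := 0) (by rw [mem_range_iota2]; omega), ?_, ?_⟩
  · exact master iota1_inj hT1 hT2
  · rw [adjoint_Tcut]
    exact master iota2_inj hS1 hS2
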